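/- Define continuous real-valued functions f, g, h on the unit circle by: f(e^{2πit}) = 1−2t for 0 ≤ t ≤ 1/2 and f(e^{2πit}) = −1+2t for 1/2 < t ≤ 1; g(e^{2πit}) = (f − f²)^{1/2}(e^{2πit}) for 0 ≤ t ≤ 1/2 and g = 0 for 1/2 < t ≤ 1; h = 0 for 0 ≤ t ≤ 1/2 and h = (f − f²)^{1/2} for 1/2 < t ≤ 1. Let A be a unital C*-algebra and let u, v ∈ A be commuting unitaries (uv = vu). Then the element e(u,v) = [[f(v), g(v) + h(v)u*], [g(v) + u h(v), 1 − f(v)]] of M₂(A) is a projection (self-adjoint idempotent). -/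

import Mathlib

open Complex

lemma aux_commute {A : Type*} [CStarAlgebra A] {w v : A}
    (h1 : w * v = v * w) (h2 : w * star v = star v * w) {y : A}
    (hy : y ∈ StarAlgebra.elemental ℂ v) : w * y = y * w := by
  induction hy using StarAlgebra.elemental.induction_on with
  | self => exact h1
  | star_self => exact h2
  | algebraMap r => exact (Algebra.commutes r w).symm
  | add a ha b hb pa pb => rw [mul_add, add_mul, pa, pb]
  | mul a ha b hb pa pb => rw [← mul_assoc, pa, mul_assoc, pb, mul_assoc]
  | closure s hs hps z hz =>
    have heq : Set.EqOn (fun x => w * x) (fun x => x * w) s := fun x hx => hps x hx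
    exact heq.closure (continuous_const.mul continuous_id) (continuous_id.mul continuous_const) hz

lemma aux_cfc_mem {A : Type*} [CStarAlgebra A] (f : ℂ → ℂ) (v : A) [IsStarNormal v] :
    cfc f v ∈ StarAlgebra.elemental ℂ v := by
  by_cases hf : ContinuousOn f (spectrum ℂ v)
  · rw [cfc_apply f v ‹_› hf, cfcHom_eq_of_isStarNormal]
    exact SetLike.coe_mem _
  · rw [cfc_apply_of_not_continuousOn v hf]
    exact zero_mem _

lemma aux_param {z : ℂ} (hz : z ∈ Metric.sphere (0 : ℂ) 1) :
    (∃ t ∈ Set.Icc (0:ℝ) (1/2), z = Complex.exp (2 * Real.pi * t * Complex.I)) ∨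
    (∃ t ∈ Set.Ioc (1/2:ℝ) 1, z = Complex.exp (2 * Real.pi * t * Complex.I)) := by
  have habs : ‖z‖ = 1 := by simpa using hz
  set θ := z.arg with hθdef
  have hzeq : z = Complex.exp (θ * Complex.I) := by
    conv_lhs => rw [← Complex.norm_mul_exp_arg_mul_I z]
    rw [habs, ofReal_one, one_mul]
  have harg : θ ∈ Set.Ioc (-Real.pi) Real.pi := Complex.arg_mem_Ioc z
  have hpi := Real.pi_pos
  have hπC : (Real.pi : ℂ) ≠ 0 := by exact_mod_cast Real.pi_ne_zero
  have h2 : (0:ℝ) < 2 * Real.pi := by positivity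
  by_cases h : 0 ≤ θ
  · left
    refine ⟨θ / (2 * Real.pi), ⟨by positivity, ?_⟩, ?_⟩
    · rw [div_le_div_iff₀ h2 (by norm_num)]
      nlinarith [harg.2]
    · rw [hzeq]
      congr 1
      push_cast
      field_simp
  · push_neg at h
    right
    refine ⟨θ / (2 * Real.pi) + 1, ⟨?_, ?_⟩, ?_⟩
    · have : -(1/2 : ℝ) < θ / (2 * Real.pi) := by
        rw [neg_lt, ← neg_div, div_lt_iff₀ h2]
        nlinarith [harg.1]
      linarith
    · have : θ / (2 * Real.pi) < 0 := div_neg_of_neg_of_pos h h2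
      linarith
    · have key : (2 * (Real.pi : ℂ) * ((θ / (2 * Real.pi) + 1 : ℝ) : ℂ) * Complex.I)
          = θ * Complex.I + 2 * Real.pi * Complex.I := by
        push_cast
        field_simp
      rw [hzeq, key, Complex.exp_add, Complex.exp_two_pi_mul_I, mul_one]

/-- Let `f, g, h` be the continuous functions on the unit circle given by
`f(e^{2πit}) = 1−2t` on `[0,1/2]` and `−1+2t` on `(1/2,1]`,
`g = (f−f²)^{1/2}` on the upper half and `0` on the lower half,
`h = 0` on the upper half and `(f−f²)^{1/2}` on the lower half.
For commuting unitaries `u, v` in a unital C*-algebra `A`, the Bott–Loring element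
`e(u,v) = [[f(v), g(v)+h(v)u*], [g(v)+u·h(v), 1−f(v)]]` of `M₂(A)` is a projection. -/
theorem bott_loring_element_is_projection
    {A : Type*} [CStarAlgebra A] (u v : A)
    (hu : u ∈ unitary A) (hv : v ∈ unitary A) (huv : u * v = v * u)
    (f g h : ℂ → ℂ)
    (hfc : ContinuousOn f (Metric.sphere (0 : ℂ) 1))
    (hgc : ContinuousOn g (Metric.sphere (0 : ℂ) 1))
    (hhc : ContinuousOn h (Metric.sphere (0 : ℂ) 1))
    (hf1 : ∀ t ∈ Set.Icc (0 : ℝ) (1/2),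
      f (Complex.exp (2 * Real.pi * t * Complex.I)) = ((1 - 2 * t : ℝ) : ℂ))
    (hf2 : ∀ t ∈ Set.Ioc (1/2 : ℝ) 1,
      f (Complex.exp (2 * Real.pi * t * Complex.I)) = ((-1 + 2 * t : ℝ) : ℂ))
    (hg1 : ∀ t ∈ Set.Icc (0 : ℝ) (1/2),
      g (Complex.exp (2 * Real.pi * t * Complex.I)) =
        ((Real.sqrt ((1 - 2 * t) - (1 - 2 * t) ^ 2) : ℝ) : ℂ))
    (hg2 : ∀ t ∈ Set.Ioc (1/2 : ℝ) 1, g (Complex.exp (2 * Real.pi * t * Complex.I)) = 0)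
    (hh1 : ∀ t ∈ Set.Icc (0 : ℝ) (1/2), h (Complex.exp (2 * Real.pi * t * Complex.I)) = 0)
    (hh2 : ∀ t ∈ Set.Ioc (1/2 : ℝ) 1,
      h (Complex.exp (2 * Real.pi * t * Complex.I)) =
        ((Real.sqrt ((-1 + 2 * t) - (-1 + 2 * t) ^ 2) : ℝ) : ℂ)) :
    IsSelfAdjoint
      (!![cfc f v, cfc g v + cfc h v * star u;
          cfc g v + u * cfc h v, 1 - cfc f v] : Matrix (Fin 2) (Fin 2) A) ∧
    (!![cfc f v, cfc g v + cfc h v * star u;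
        cfc g v + u * cfc h v, 1 - cfc f v] : Matrix (Fin 2) (Fin 2) A) *
      !![cfc f v, cfc g v + cfc h v * star u;
         cfc g v + u * cfc h v, 1 - cfc f v] =
      !![cfc f v, cfc g v + cfc h v * star u;
         cfc g v + u * cfc h v, 1 - cfc f v] := by
  haveI : IsStarNormal v :=
    ⟨((Unitary.star_mul_self_of_mem hv).trans (Unitary.mul_star_self_of_mem hv).symm : _)⟩
  have hsub : spectrum ℂ v ⊆ Metric.sphere (0:ℂ) 1 := spectrum.subset_circle_of_unitary hv
  have hf : ContinuousOn f (spectrum ℂ v) := hfc.mono hsub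
  have hg : ContinuousOn g (spectrum ℂ v) := hgc.mono hsub
  have hh : ContinuousOn h (spectrum ℂ v) := hhc.mono hsub
  -- pointwise structure on the spectrum
  have main : ∀ z ∈ spectrum ℂ v, ∃ a b c : ℝ,
      f z = (a : ℂ) ∧ g z = (b : ℂ) ∧ h z = (c : ℂ) ∧ b * c = 0 ∧
      b * b + c * c = a - a * a := by
    intro z hz
    rcases aux_param (hsub hz) with ⟨t, ht, rfl⟩ | ⟨t, ht, rfl⟩
    · refine ⟨1 - 2*t, Real.sqrt ((1 - 2*t) - (1 - 2*t)^2), 0,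
        hf1 t ht, hg1 t ht, hh1 t ht, mul_zero _, ?_⟩
      have hx : (0:ℝ) ≤ (1 - 2*t) - (1 - 2*t)^2 := by nlinarith [ht.1, ht.2]
      rw [Real.mul_self_sqrt hx]
      nlinarith
    · refine ⟨-1 + 2*t, 0, Real.sqrt ((-1 + 2*t) - (-1 + 2*t)^2),
        hf2 t ht, hg2 t ht, hh2 t ht, zero_mul _, ?_⟩
      have hx : (0:ℝ) ≤ (-1 + 2*t) - (-1 + 2*t)^2 := by nlinarith [ht.1, ht.2]
      rw [Real.mul_self_sqrt hx]
      nlinarith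
  set F := cfc f v with hF
  set G := cfc g v with hG
  set H := cfc h v with hH
  -- self-adjointness of the entries
  have hFsa : star F = F := by
    rw [hF, ← cfc_star]
    exact cfc_congr fun z hz => by
      obtain ⟨a, b, c, hfa, -, -, -, -⟩ := main z hz
      simp [hfa, Complex.conj_ofReal]
  have hGsa : star G = G := by
    rw [hG, ← cfc_star]
    exact cfc_congr fun z hz => by
      obtain ⟨a, b, c, -, hgb, -, -, -⟩ := main z hz
      simp [hgb, Complex.conj_ofReal]
  have hHsa : star H = H := by
    rw [hH, ← cfc_star]
    exact cfc_congr fun z hz => by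
      obtain ⟨a, b, c, -, -, hhc', -, -⟩ := main z hz
      simp [hhc', Complex.conj_ofReal]
  -- algebraic relations
  have hGH : G * H = 0 := by
    rw [hG, hH, ← cfc_mul g h v hg hh, ← cfc_zero (R := ℂ) (a := v)]
    exact cfc_congr fun z hz => by
      obtain ⟨a, b, c, -, hgb, hhc', hbc, -⟩ := main z hz
      simp only [hgb, hhc', Pi.zero_apply]
      exact_mod_cast congrArg (fun r : ℝ => (r : ℂ)) hbc
  have hHG : H * G = 0 := by
    rw [hH, hG, ← (cfc_commute_cfc g h v).eq, ← hG, ← hH]; exact hGH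
  have hPy : G * G + H * H = F - F * F := by
    rw [hF, hG, hH, ← cfc_mul g g v hg hg, ← cfc_mul h h v hh hh,
      ← cfc_add v (fun x => g x * g x) (fun x => h x * h x) (hg.mul hg) (hh.mul hh), ← cfc_mul f f v hf hf,
      ← cfc_sub f (fun x => f x * f x) v hf (hf.mul hf)]
    exact cfc_congr fun z hz => by
      obtain ⟨a, b, c, hfa, hgb, hhc', -, hpy⟩ := main z hz
      simp only [hfa, hgb, hhc']
      exact_mod_cast congrArg (fun r : ℝ => (r : ℂ)) hpy
  -- commutation of u and star u with the functional calculus elements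
  have huv2 : u * star v = star v * u := by
    have h1 : star v * (u * v) * star v = star v * (v * u) * star v := by rw [huv]
    rw [show star v * (u * v) * star v = star v * u * (v * star v) by
        simp only [mul_assoc],
      show star v * (v * u) * star v = (star v * v) * (u * star v) by
        simp only [mul_assoc],
      Unitary.mul_star_self_of_mem hv, Unitary.star_mul_self_of_mem hv,
      mul_one, one_mul] at h1
    exact h1.symm
  have hsuv : star u * v = v * star u := by
    have := congrArg star huv2
    simpa [star_mul, star_star, mul_assoc] using this.symm
  have hsuv2 : star u * star v = star v * star u := by
    have := congrArg star huv
    simpa [star_mul] using this.symm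
  have cuF : Commute u F := aux_commute huv huv2 (aux_cfc_mem f v)
  have cuG : Commute u G := aux_commute huv huv2 (aux_cfc_mem g v)
  have cuH : Commute u H := aux_commute huv huv2 (aux_cfc_mem h v)
  have csuF : Commute (star u) F := aux_commute hsuv hsuv2 (aux_cfc_mem f v)
  have csuG : Commute (star u) G := aux_commute hsuv hsuv2 (aux_cfc_mem g v)
  have csuH : Commute (star u) H := aux_commute hsuv hsuv2 (aux_cfc_mem h v)
  have cFG : Commute F G := cfc_commute_cfc f g v
  have cFH : Commute F H := cfc_commute_cfc f h v
  constructor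
  · -- self-adjointness
    show star _ = _
    ext i j
    fin_cases i <;> fin_cases j <;>
      simp [Matrix.star_apply, star_add, star_mul, star_sub, star_one,
        hFsa, hGsa, hHsa, star_star]
  · -- idempotence
    rw [Matrix.mul_fin_two]
    have e00 : F * F + (G + H * star u) * (G + u * H) = F := by
      have t1 : G * (u * H) = 0 := by
        rw [← mul_assoc, ← cuG.eq, mul_assoc, hGH, mul_zero]
      have t2 : H * star u * G = 0 := by
        rw [mul_assoc, csuG.eq, ← mul_assoc, hHG, zero_mul]
      have t3 : H * star u * (u * H) = H * H := by
        rw [mul_assoc, ← mul_assoc (star u) u H, Unitary.star_mul_self_of_mem hu, one_mul]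
      calc F * F + (G + H * star u) * (G + u * H)
          = F * F + (G * G + G * (u * H) + (H * star u * G + H * star u * (u * H))) := by
            noncomm_ring
        _ = F * F + (G * G + H * H) := by rw [t1, t2, t3]; abel
        _ = F * F + (F - F * F) := by rw [hPy]
        _ = F := by abel
    have e01 : F * (G + H * star u) + (G + H * star u) * (1 - F) = G + H * star u := by
      have c : Commute F (G + H * star u) := cFG.add_right (cFH.mul_right csuF.symm)
      rw [c.eq]
      noncomm_ring
    have e10 : (G + u * H) * F + (1 - F) * (G + u * H) = G + u * H := by
      have c : Commute F (G + u * H) := cFG.add_right (cuF.symm.mul_right cFH)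
      rw [← c.eq]
      noncomm_ring
    have e11 : (G + u * H) * (G + H * star u) + (1 - F) * (1 - F) = 1 - F := by
      have t1 : G * (H * star u) = 0 := by rw [← mul_assoc, hGH, zero_mul]
      have t2 : u * (H * G) = 0 := by rw [hHG, mul_zero]
      have t3 : u * (H * H) * star u = H * H := by
        rw [(cuH.mul_right cuH).eq, mul_assoc, Unitary.mul_star_self_of_mem hu, mul_one]
      calc (G + u * H) * (G + H * star u) + (1 - F) * (1 - F)
          = G * G + G * (H * star u) + (u * (H * G) + u * (H * H) * star u)
              + (1 - F) * (1 - F) := by noncomm_ring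
        _ = (G * G + H * H) + (1 - F) * (1 - F) := by rw [t1, t2, t3]; abel
        _ = (F - F * F) + (1 - F) * (1 - F) := by rw [hPy]
        _ = 1 - F := by noncomm_ring
    rw [e00, e01, e10, e11]
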